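/- Let Δ be a finite set, let G ≤ Sym(Δ) be a transitive permutation group of rank r, and let m ≥ 1. Then the wreath product G ↑ Sym(m) in product action, as a permutation group on Δ^m, has rank equal to the binomial coefficient C(r + m − 1, m). -/

import Mathlib

/-- The rank of a permutation group `G ≤ Sym(Ω)`: the number of orbits of `G`
on `Ω × Ω` under the componentwise action (the number of 2-orbits). -/
noncomputable def permRank {Ω : Type*} (G : Subgroup (Equiv.Perm Ω)) : ℕ :=
  Nat.card (MulAction.orbitRel.Quotient G (Ω × Ω))

/-- The wreath product `G ↑ Sym(m)` in product action, as a subgroup of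
`Sym(Δ^m)`: all permutations of the form `v ↦ fun i => g i (v (σ⁻¹ i))` with
`σ ∈ Sym(m)` and `g i ∈ G` for each `i`. -/
def productWreath {Δ : Type*} (G : Subgroup (Equiv.Perm Δ)) (m : ℕ) :
    Subgroup (Equiv.Perm (Fin m → Δ)) where
  carrier := {f | ∃ (σ : Equiv.Perm (Fin m)) (g : Fin m → Equiv.Perm Δ),
    (∀ i, g i ∈ G) ∧ ∀ (v : Fin m → Δ) (i : Fin m), f v i = g i (v (σ⁻¹ i))}
  one_mem' := ⟨1, fun _ => 1, fun _ => G.one_mem, fun _ _ => rfl⟩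
  mul_mem' := by
    rintro f f' ⟨σ, g, hgG, hf⟩ ⟨σ', g', hgG', hf'⟩
    refine ⟨σ * σ', fun i => g i * g' (σ⁻¹ i), fun i => G.mul_mem (hgG i) (hgG' (σ⁻¹ i)),
      fun v i => ?_⟩
    have : (f * f') v = f (f' v) := rfl
    rw [this, hf (f' v) i, hf' v (σ⁻¹ i)]
    rfl
  inv_mem' := by
    rintro f ⟨σ, g, hgG, hf⟩
    refine ⟨σ⁻¹, fun i => (g (σ i))⁻¹, fun i => G.inv_mem (hgG (σ i)), fun v i => ?_⟩
    have h2 : f⁻¹ v = fun j => (g (σ j))⁻¹ (v (σ j)) := by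
      apply f.injective
      rw [show f (f⁻¹ v) = v from Equiv.apply_symm_apply f v]
      funext j
      rw [hf]
      simp
    rw [h2]
    simp

/-- If `ofFn f` is a permutation of `ofFn g`, the tuples differ by a permutation of indices. -/
lemma exists_perm_of_ofFn_perm {α : Type*} [LinearOrder α] {n : ℕ} {f g : Fin n → α}
    (h : (List.ofFn f).Perm (List.ofFn g)) :
    ∃ σ : Equiv.Perm (Fin n), ∀ i, f (σ i) = g i := by
  have h1 : List.ofFn (f ∘ Tuple.sort f) = List.ofFn (g ∘ Tuple.sort g) :=
    List.Perm.eq_of_sortedLE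
      (Tuple.monotone_sort f).sortedLE_ofFn (Tuple.monotone_sort g).sortedLE_ofFn
      (((Equiv.Perm.ofFn_comp_perm _ f).trans h).trans
        (Equiv.Perm.ofFn_comp_perm (Tuple.sort g) g).symm)
  have h2 : f ∘ Tuple.sort f = g ∘ Tuple.sort g := List.ofFn_injective h1
  refine ⟨Tuple.sort f * (Tuple.sort g)⁻¹, fun i => ?_⟩
  have := congrFun h2 ((Tuple.sort g)⁻¹ i)
  simpa using this

/-- A multiset of card `m` comes from an `m`-tuple. -/
lemma exists_ofFn_of_card {α : Type*} {m : ℕ} (s : Multiset α) (h : Multiset.card s = m) :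
    ∃ F : Fin m → α, (↑(List.ofFn F) : Multiset α) = s := by
  induction s using Quotient.inductionOn with
  | h l =>
    have hl : l.length = m := h
    subst hl
    exact ⟨l.get, by rw [List.ofFn_get]; rfl⟩

/-- An explicit wreath-product element. -/
def wreathElt {Δ : Type*} {m : ℕ} (σ : Equiv.Perm (Fin m)) (g : Fin m → Equiv.Perm Δ) :
    Equiv.Perm (Fin m → Δ) where
  toFun := fun v i => g i (v (σ⁻¹ i))
  invFun := fun v i => (g (σ i))⁻¹ (v (σ i))
  left_inv := fun v => by funext i; simp
  right_inv := fun v => by funext i; simp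

lemma wreathElt_mem {Δ : Type*} {m : ℕ} (G : Subgroup (Equiv.Perm Δ))
    (σ : Equiv.Perm (Fin m)) (g : Fin m → Equiv.Perm Δ) (hg : ∀ i, g i ∈ G) :
    wreathElt σ g ∈ productWreath G m :=
  ⟨σ, g, hg, fun _ _ => rfl⟩

/-- If `G ≤ Sym(Δ)` is transitive of rank `r` and `m ≥ 1`, then
the product-action wreath product `G ↑ Sym(m)` on `Δ^m` has rank `C(r+m-1, m)`. -/
theorem permRank_productWreath {Δ : Type*} [Finite Δ] (G : Subgroup (Equiv.Perm Δ))
    (htrans : MulAction.IsPretransitive G Δ) (r m : ℕ) (hr : permRank G = r)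
    (hm : 1 ≤ m) :
    permRank (productWreath G m) = (r + m - 1).choose m := by
  classical
  set Q := MulAction.orbitRel.Quotient G (Δ × Δ) with hQ
  letI : Fintype Q := Fintype.ofFinite Q
  letI : LinearOrder Q := LinearOrder.lift' (fun q => ((Fintype.equivFin Q) q : ℕ))
    (fun a b hab => (Fintype.equivFin Q).injective (Fin.val_injective hab))
  set W := productWreath G m with hW
  set X := (Fin m → Δ) × (Fin m → Δ) with hX
  -- the invariant
  set F : X → Fin m → Q := fun p i => Quotient.mk'' (p.1 i, p.2 i) with hF
  set Φ : X → Sym Q m := fun p => ⟨(↑(List.ofFn (F p)) : Multiset Q), by simp⟩ with hΦ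
  -- invariance under the action
  have inv : ∀ (w : W) (p : X), Φ (w • p) = Φ p := by
    rintro ⟨f, σ, g, hgG, hf⟩ p
    have hFw : ∀ i, F ((⟨f, σ, g, hgG, hf⟩ : W) • p) i = F p (σ⁻¹ i) := by
      intro i
      have h1 : ((⟨f, σ, g, hgG, hf⟩ : W) • p).1 i = g i (p.1 (σ⁻¹ i)) := hf p.1 i
      have h2 : ((⟨f, σ, g, hgG, hf⟩ : W) • p).2 i = g i (p.2 (σ⁻¹ i)) := hf p.2 i
      simp only [hF, h1, h2]
      apply Quotient.sound'
      exact ⟨⟨g i, hgG i⟩, rfl⟩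
    apply Subtype.ext
    show (↑(List.ofFn (F _)) : Multiset Q) = ↑(List.ofFn (F p))
    rw [Multiset.coe_eq_coe]
    have : List.ofFn (F ((⟨f, σ, g, hgG, hf⟩ : W) • p)) = List.ofFn (F p ∘ ⇑σ⁻¹) := by
      congr 1
      funext i
      exact hFw i
    rw [this]
    exact Equiv.Perm.ofFn_comp_perm σ⁻¹ (F p)
  -- the induced map on the quotient
  set Ψ : MulAction.orbitRel.Quotient W X → Sym Q m :=
    Quotient.lift Φ (by
      rintro a b hab
      obtain ⟨w, rfl⟩ := hab
      exact inv w b) with hΨ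
  have hbij : Function.Bijective Ψ := by
    constructor
    · -- injective
      rintro x y
      induction x using Quotient.inductionOn with
      | h p =>
      induction y using Quotient.inductionOn with
      | h p' =>
      intro hxy
      have heq : Φ p = Φ p' := hxy
      have hperm : (List.ofFn (F p)).Perm (List.ofFn (F p')) := by
        rw [← Multiset.coe_eq_coe]
        exact congrArg Subtype.val heq
      obtain ⟨σ, hσ⟩ := exists_perm_of_ofFn_perm hperm
      -- for each i, pick a group element
      have hγ : ∀ i, ∃ γ : G, γ • (p.1 (σ i), p.2 (σ i)) = (p'.1 i, p'.2 i) := by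
        intro i
        have : F p (σ i) = F p' i := hσ i
        have h' := Quotient.exact' this
        rw [MulAction.orbitRel_apply] at h'
        obtain ⟨γ, hγ⟩ := h'
        exact ⟨γ⁻¹, by rw [← hγ]; simp⟩
      choose γ hγ using hγ
      have hfst : ∀ i, (γ i : Equiv.Perm Δ) (p.1 (σ i)) = p'.1 i := by
        intro i
        have := congrArg Prod.fst (hγ i)
        exact this
      have hsnd : ∀ i, (γ i : Equiv.Perm Δ) (p.2 (σ i)) = p'.2 i := by
        intro i
        have := congrArg Prod.snd (hγ i)
        exact this
      set w : W := ⟨wreathElt σ⁻¹ (fun i => (γ i : Equiv.Perm Δ)),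
        wreathElt_mem G σ⁻¹ _ (fun i => (γ i).2)⟩ with hw'
      have hmem : w • p = p' := by
        show (wreathElt σ⁻¹ (fun i => (γ i : Equiv.Perm Δ))) • p = p'
        apply Prod.ext
        · funext i
          show (γ i : Equiv.Perm Δ) (p.1 (σ⁻¹⁻¹ i)) = p'.1 i
          rw [inv_inv]; exact hfst i
        · funext i
          show (γ i : Equiv.Perm Δ) (p.2 (σ⁻¹⁻¹ i)) = p'.2 i
          rw [inv_inv]; exact hsnd i
      exact (Quotient.sound ((MulAction.orbitRel_apply).mpr (MulAction.mem_orbit_iff.mpr ⟨w, hmem⟩))).symm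
    · -- surjective
      rintro ⟨s, hs⟩
      obtain ⟨T, hT⟩ := exists_ofFn_of_card s hs
      set p : X := (fun i => (Quotient.out (T i)).1, fun i => (Quotient.out (T i)).2) with hp
      refine ⟨Quotient.mk _ p, ?_⟩
      show Φ p = ⟨s, hs⟩
      apply Subtype.ext
      show (↑(List.ofFn (F p)) : Multiset Q) = s
      rw [← hT]
      have hFT : F p = T := by
        funext i
        show Quotient.mk'' ((Quotient.out (T i)).1, (Quotient.out (T i)).2) = T i
        rw [show ((Quotient.out (T i)).1, (Quotient.out (T i)).2) = Quotient.out (T i) from rfl]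
        exact Quotient.out_eq' (T i)
      rw [hFT]
  have hcardQ : Nat.card Q = r := hr
  rw [permRank, Nat.card_eq_of_bijective Ψ hbij, Nat.card_eq_fintype_card,
    Sym.card_sym_eq_choose, ← Nat.card_eq_fintype_card, hcardQ]
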